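/- For all real λ > 0, δ ∈ (0,1], and b > 0 with δ = min{λ/b, 1}, the integral over ℝ³ of λ³ / (δ³|p|⁶ + λ²p₃² + λ³) with respect to dp is at most c·λ^{1/2}·max{b, λ} for a universal constant c. -/

import Mathlib

open MeasureTheory Real

-- polynomial inequality
lemma poly_ineq (n : ℕ) {t : ℝ} (ht : 0 ≤ t) : (1 + t) ^ n ≤ 2 ^ n * (1 + t ^ n) := by
  rcases le_total t 1 with h | h
  · calc (1 + t) ^ n ≤ 2 ^ n := pow_le_pow_left₀ (by linarith) (by linarith) n
    _ ≤ 2 ^ n * (1 + t ^ n) := le_mul_of_one_le_right (by positivity) (by nlinarith [pow_nonneg ht n])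
  · calc (1 + t) ^ n ≤ (2 * t) ^ n := pow_le_pow_left₀ (by linarith) (by linarith) n
    _ = 2 ^ n * t ^ n := mul_pow 2 t n
    _ ≤ 2 ^ n * (1 + t ^ n) := by
      have h2 : (0:ℝ) < 2 ^ n := by positivity
      nlinarith

lemma integrable_aux (m : ℕ) (e : ℝ) (he : 0 < e) (h1 : 1 < 2 * m * e) :
    Integrable (fun s : ℝ => (1 + s ^ (2 * m)) ^ (-e)) := by
  have h2 : ∀ s : ℝ, (0:ℝ) < 1 + s ^ (2 * m) := by
    intro s
    have : 0 ≤ s ^ (2 * m) := by rw [pow_mul]; positivity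
    linarith
  have hint : Integrable (fun x : ℝ => (2:ℝ) ^ ((2*m : ℝ) * e) * (1 + ‖x‖) ^ (-((2*m:ℝ) * e))) := by
    refine Integrable.const_mul ?_ _
    refine integrable_one_add_norm (E := ℝ) ?_
    simpa using h1
  refine hint.mono' ?_ ?_
  · exact ((continuous_const.add (continuous_pow _)).rpow_const
      (fun x => Or.inl (h2 x).ne')).aestronglyMeasurable
  · refine Filter.Eventually.of_forall fun s => ?_
    rw [Real.norm_eq_abs, abs_of_nonneg (rpow_nonneg (h2 s).le _), Real.norm_eq_abs]
    have habs : |s| ^ (2 * m) = s ^ (2 * m) := by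
      rw [pow_mul, pow_mul, sq_abs]
    have key : (1 + |s|) ^ (2 * m) ≤ 2 ^ (2 * m) * (1 + s ^ (2 * m)) := by
      rw [← habs]; exact poly_ineq (2 * m) (abs_nonneg s)
    -- raise to power e
    have h3 : (0:ℝ) < 1 + |s| := by positivity
    have key2 : ((1 + |s|) ^ (2 * m) : ℝ) ^ e ≤ (2 ^ (2 * m) * (1 + s ^ (2 * m))) ^ e :=
      rpow_le_rpow (by positivity) key he.le
    rw [mul_rpow (by positivity) (h2 s).le] at key2
    rw [← rpow_natCast ((1:ℝ) + |s|) (2*m), ← rpow_natCast (2:ℝ) (2*m),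
      ← rpow_mul h3.le, ← rpow_mul (by norm_num : (0:ℝ) ≤ 2)] at key2
    push_cast at key2
    -- key2 : (1+|s|)^(2m*e) ≤ 2^(2m*e) * (1+s^(2m))^e
    rw [rpow_neg (h2 s).le, rpow_neg (by positivity : (0:ℝ) ≤ 1 + |s|)]
    rw [inv_eq_one_div, inv_eq_one_div, mul_one_div]
    rw [div_le_div_iff₀ (rpow_pos_of_pos (h2 s) e) (rpow_pos_of_pos h3 _)]
    calc (1:ℝ) * (1 + |s|) ^ ((2*m:ℝ) * e) = (1 + |s|) ^ ((2*m:ℝ) * e) := one_mul _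
    _ ≤ 2 ^ ((2*m:ℝ) * e) * (1 + s ^ (2*m)) ^ e := key2

noncomputable def K1 : ℝ := ∫ s : ℝ, (1 + s ^ 6) ^ (-(1/5) : ℝ)
noncomputable def K3 : ℝ := ∫ s : ℝ, (1 + s ^ 2) ^ (-(3/5) : ℝ)

lemma integrable_g1 : Integrable (fun s : ℝ => (1 + s ^ 6) ^ (-(1/5) : ℝ)) := by
  have := integrable_aux 3 (1/5) (by norm_num) (by norm_num)
  norm_num at this
  exact this

lemma integrable_g3 : Integrable (fun s : ℝ => (1 + s ^ 2) ^ (-(3/5) : ℝ)) := by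
  have := integrable_aux 1 (3/5) (by norm_num) (by norm_num)
  norm_num at this
  exact this

lemma K1_nonneg : 0 ≤ K1 := integral_nonneg fun s => rpow_nonneg (by positivity) _
lemma K3_nonneg : 0 ≤ K3 := integral_nonneg fun s => rpow_nonneg (by positivity) _

lemma rw1 {lam δ : ℝ} (hl : 0 < lam) (hδ : 0 < δ) (t : ℝ) :
    lam ^ ((3:ℝ)/5) * (δ ^ 3 * t ^ 6 + lam ^ 3) ^ (-(1/5) : ℝ)
      = (1 + (t / Real.sqrt (lam / δ)) ^ 6) ^ (-(1/5) : ℝ) := by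
  set σ := Real.sqrt (lam / δ) with hσdef
  have hσ : 0 < σ := Real.sqrt_pos.mpr (by positivity)
  have hσ2 : σ ^ 2 = lam / δ := Real.sq_sqrt (by positivity)
  have hσ6 : σ ^ 6 = (lam / δ) ^ 3 := by
    rw [show (6:ℕ) = 2 * 3 from rfl, pow_mul, hσ2]
  have hkey : δ ^ 3 * t ^ 6 + lam ^ 3 = lam ^ 3 * (1 + (t / σ) ^ 6) := by
    rw [div_pow, hσ6, div_pow]
    field_simp
    ring
  rw [hkey, mul_rpow (by positivity) (by positivity),
    ← rpow_natCast lam 3, ← rpow_mul hl.le, ← mul_assoc, ← rpow_add hl]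
  norm_num

lemma rw3 {lam : ℝ} (hl : 0 < lam) (t : ℝ) :
    lam ^ ((9:ℝ)/5) * (lam ^ 2 * t ^ 2 + lam ^ 3) ^ (-(3/5) : ℝ)
      = (1 + (t / Real.sqrt lam) ^ 2) ^ (-(3/5) : ℝ) := by
  have hs : 0 < Real.sqrt lam := Real.sqrt_pos.mpr hl
  have hs2 : Real.sqrt lam ^ 2 = lam := Real.sq_sqrt hl.le
  have hkey : lam ^ 2 * t ^ 2 + lam ^ 3 = lam ^ 3 * (1 + (t / Real.sqrt lam) ^ 2) := by
    rw [div_pow, hs2]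
    field_simp
    ring
  rw [hkey, mul_rpow (by positivity) (by positivity),
    ← rpow_natCast lam 3, ← rpow_mul hl.le, ← mul_assoc, ← rpow_add hl]
  norm_num

lemma integrable_G0 {lam δ : ℝ} (hl : 0 < lam) (hδ : 0 < δ) :
    Integrable (fun t : ℝ => lam ^ ((3:ℝ)/5) * (δ ^ 3 * t ^ 6 + lam ^ 3) ^ (-(1/5) : ℝ)) := by
  simp_rw [rw1 hl hδ]
  exact integrable_g1.comp_div (Real.sqrt_pos.mpr (by positivity)).ne'

lemma integrable_G2 {lam : ℝ} (hl : 0 < lam) :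
    Integrable (fun t : ℝ => lam ^ ((9:ℝ)/5) * (lam ^ 2 * t ^ 2 + lam ^ 3) ^ (-(3/5) : ℝ)) := by
  simp_rw [rw3 hl]
  exact integrable_g3.comp_div (Real.sqrt_pos.mpr hl).ne'

lemma int_G0 {lam δ : ℝ} (hl : 0 < lam) (hδ : 0 < δ) :
    (∫ t : ℝ, lam ^ ((3:ℝ)/5) * (δ ^ 3 * t ^ 6 + lam ^ 3) ^ (-(1/5) : ℝ))
      = Real.sqrt (lam / δ) * K1 := by
  have hσ : 0 < Real.sqrt (lam / δ) := Real.sqrt_pos.mpr (by positivity)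
  simp_rw [rw1 hl hδ]
  rw [MeasureTheory.Measure.integral_comp_div (fun s : ℝ => (1 + s ^ 6) ^ (-(1/5) : ℝ))
    (Real.sqrt (lam / δ)), abs_of_pos hσ, smul_eq_mul]
  rfl

lemma int_G2 {lam : ℝ} (hl : 0 < lam) :
    (∫ t : ℝ, lam ^ ((9:ℝ)/5) * (lam ^ 2 * t ^ 2 + lam ^ 3) ^ (-(3/5) : ℝ))
      = Real.sqrt lam * K3 := by
  have hσ : 0 < Real.sqrt lam := Real.sqrt_pos.mpr hl
  simp_rw [rw3 hl]
  rw [MeasureTheory.Measure.integral_comp_div (fun s : ℝ => (1 + s ^ 2) ^ (-(3/5) : ℝ))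
    (Real.sqrt lam), abs_of_pos hσ, smul_eq_mul]
  rfl

lemma pointwise_bound {lam δ : ℝ} (hl : 0 < lam) (hδ : 0 < δ) (x : EuclideanSpace ℝ (Fin 3)) :
    lam ^ 3 / (δ ^ 3 * ‖x‖ ^ 6 + lam ^ 2 * (x 2) ^ 2 + lam ^ 3)
      ≤ (lam ^ ((3:ℝ)/5) * (δ ^ 3 * (x 0) ^ 6 + lam ^ 3) ^ (-(1/5) : ℝ))
        * (lam ^ ((3:ℝ)/5) * (δ ^ 3 * (x 1) ^ 6 + lam ^ 3) ^ (-(1/5) : ℝ))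
        * (lam ^ ((9:ℝ)/5) * (lam ^ 2 * (x 2) ^ 2 + lam ^ 3) ^ (-(3/5) : ℝ)) := by
  set u := δ ^ 3 * (x 0) ^ 6 + lam ^ 3 with hu_def
  set v := δ ^ 3 * (x 1) ^ 6 + lam ^ 3 with hv_def
  set w := lam ^ 2 * (x 2) ^ 2 + lam ^ 3 with hw_def
  set D := δ ^ 3 * ‖x‖ ^ 6 + lam ^ 2 * (x 2) ^ 2 + lam ^ 3 with hD_def
  have hu : 0 < u := by positivity
  have hv : 0 < v := by positivity
  have hw : 0 < w := by positivity
  have hnorm : ∀ i : Fin 3, (x i) ^ 2 ≤ ‖x‖ ^ 2 := by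
    intro i
    rw [EuclideanSpace.norm_eq, Real.sq_sqrt (by positivity)]
    have := Finset.single_le_sum (f := fun j => ‖x j‖ ^ 2)
      (fun j _ => by positivity) (Finset.mem_univ i)
    simpa [Real.norm_eq_abs, sq_abs] using this
  have hx6 : ∀ i : Fin 3, (x i) ^ 6 ≤ ‖x‖ ^ 6 := by
    intro i
    calc (x i) ^ 6 = ((x i) ^ 2) ^ 3 := by ring
    _ ≤ (‖x‖ ^ 2) ^ 3 := pow_le_pow_left₀ (by positivity) (hnorm i) 3
    _ = ‖x‖ ^ 6 := by ring
  have hδ3 : (0:ℝ) ≤ δ ^ 3 := by positivity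
  have huD : u ≤ D := by
    have h1 := mul_le_mul_of_nonneg_left (hx6 0) hδ3
    have h2 : (0:ℝ) ≤ lam ^ 2 * (x 2) ^ 2 := by positivity
    rw [hu_def, hD_def]; linarith
  have hvD : v ≤ D := by
    have h1 := mul_le_mul_of_nonneg_left (hx6 1) hδ3
    have h2 : (0:ℝ) ≤ lam ^ 2 * (x 2) ^ 2 := by positivity
    rw [hv_def, hD_def]; linarith
  have hwD : w ≤ D := by
    have h1 : (0:ℝ) ≤ δ ^ 3 * ‖x‖ ^ 6 := by positivity
    rw [hw_def, hD_def]; linarith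
  have hD : 0 < D := lt_of_lt_of_le hu huD
  have hmain : u ^ ((1:ℝ)/5) * v ^ ((1:ℝ)/5) * w ^ ((3:ℝ)/5) ≤ D := by
    calc u ^ ((1:ℝ)/5) * v ^ ((1:ℝ)/5) * w ^ ((3:ℝ)/5)
        ≤ D ^ ((1:ℝ)/5) * D ^ ((1:ℝ)/5) * D ^ ((3:ℝ)/5) := by
          gcongr
    _ = D := by rw [← rpow_add hD, ← rpow_add hD]; norm_num
  have hP : 0 < u ^ ((1:ℝ)/5) * v ^ ((1:ℝ)/5) * w ^ ((3:ℝ)/5) := by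
    have := rpow_pos_of_pos hu ((1:ℝ)/5)
    have := rpow_pos_of_pos hv ((1:ℝ)/5)
    have := rpow_pos_of_pos hw ((3:ℝ)/5)
    positivity
  have step : lam ^ 3 / D ≤ lam ^ 3 / (u ^ ((1:ℝ)/5) * v ^ ((1:ℝ)/5) * w ^ ((3:ℝ)/5)) := by
    gcongr
  refine step.trans (le_of_eq ?_)
  have hlam3 : (lam:ℝ) ^ (3:ℕ) = lam ^ ((3:ℝ)/5) * lam ^ ((3:ℝ)/5) * lam ^ ((9:ℝ)/5) := by
    rw [← rpow_natCast lam 3, ← rpow_add hl, ← rpow_add hl]; norm_num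
  rw [rpow_neg hu.le, rpow_neg hv.le, rpow_neg hw.le, hlam3, div_eq_mul_inv, mul_inv, mul_inv]
  ring
lemma euclid_prod_integral (g0 g2 : ℝ → ℝ) :
    (∫ p : EuclideanSpace ℝ (Fin 3), g0 (p 0) * g0 (p 1) * g2 (p 2))
      = (∫ t, g0 t) * (∫ t, g0 t) * (∫ t, g2 t) := by
  have hMP := (EuclideanSpace.volume_preserving_symm_measurableEquiv_toLp (Fin 3)).symm
  rw [← hMP.integral_comp (MeasurableEquiv.measurableEmbedding _)]
  show (∫ x : Fin 3 → ℝ, g0 (x 0) * g0 (x 1) * g2 (x 2)) = _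
  have h1 : (fun x : Fin 3 → ℝ => g0 (x 0) * g0 (x 1) * g2 (x 2))
      = fun x : Fin 3 → ℝ => ∏ i, (![g0, g0, g2] i) (x i) := by
    funext x; simp [Fin.prod_univ_three]
  rw [h1, volume_pi, MeasureTheory.integral_fintype_prod_eq_prod (ι := Fin 3) ![g0, g0, g2] (μ := fun _ => volume),
    Fin.prod_univ_three]
  simp

lemma euclid_prod_integrable (g0 g2 : ℝ → ℝ) (h0 : Integrable g0) (h2 : Integrable g2) :
    Integrable (fun p : EuclideanSpace ℝ (Fin 3) => g0 (p 0) * g0 (p 1) * g2 (p 2)) := by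
  have hMP := (EuclideanSpace.volume_preserving_symm_measurableEquiv_toLp (Fin 3)).symm
  rw [← hMP.integrable_comp_emb (MeasurableEquiv.measurableEmbedding _)]
  show Integrable (fun x : Fin 3 → ℝ => g0 (x 0) * g0 (x 1) * g2 (x 2)) volume
  have h1 : (fun x : Fin 3 → ℝ => g0 (x 0) * g0 (x 1) * g2 (x 2))
      = fun x : Fin 3 → ℝ => ∏ i, (![g0, g0, g2] i) (x i) := by
    funext x; simp [Fin.prod_univ_three]
  rw [h1]
  apply MeasureTheory.Integrable.fintype_prod (f := ![g0, g0, g2])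
  intro i
  fin_cases i <;> simpa

/-- The momentum-space integral bound:
`∫_{ℝ³} λ³/(δ³|p|⁶ + λ²p₃² + λ³) dp ≤ c λ^{1/2} max{b, λ}` for a universal `c`,
where `δ = min{λ/b, 1}`. -/
theorem stmt7 : ∃ c : ℝ, 0 < c ∧
    ∀ (lam δ b : ℝ), 0 < lam → 0 < b → δ = min (lam / b) 1 →
      (∫ p : EuclideanSpace ℝ (Fin 3),
          lam ^ 3 / (δ ^ 3 * ‖p‖ ^ 6 + lam ^ 2 * (p 2) ^ 2 + lam ^ 3))
        ≤ c * Real.sqrt lam * max b lam := by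
  refine ⟨K1 ^ 2 * K3 + 1, by nlinarith [K1_nonneg, K3_nonneg, sq_nonneg K1], ?_⟩
  intro lam δ b hl hb hδdef
  have hδ : 0 < δ := hδdef ▸ lt_min (div_pos hl hb) one_pos
  have hmax : lam / δ = max b lam := by
    rcases le_total lam b with h | h
    · rw [hδdef, min_eq_left ((div_le_one hb).mpr h), max_eq_left h,
        div_div_eq_mul_div, mul_comm, mul_div_assoc, div_self hl.ne', mul_one]
    · rw [hδdef, min_eq_right ((one_le_div hb).mpr h), div_one, max_eq_right h]
  set g0 : ℝ → ℝ := fun t => lam ^ ((3:ℝ)/5) * (δ ^ 3 * t ^ 6 + lam ^ 3) ^ (-(1/5) : ℝ) with hg0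
  set g2 : ℝ → ℝ := fun t => lam ^ ((9:ℝ)/5) * (lam ^ 2 * t ^ 2 + lam ^ 3) ^ (-(3/5) : ℝ) with hg2
  have hsl : 0 < Real.sqrt lam := Real.sqrt_pos.mpr hl
  have hM : 0 < max b lam := lt_max_of_lt_right hl
  calc (∫ p : EuclideanSpace ℝ (Fin 3),
          lam ^ 3 / (δ ^ 3 * ‖p‖ ^ 6 + lam ^ 2 * (p 2) ^ 2 + lam ^ 3))
      ≤ ∫ p : EuclideanSpace ℝ (Fin 3), g0 (p 0) * g0 (p 1) * g2 (p 2) := by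
        refine integral_mono_of_nonneg (Filter.Eventually.of_forall fun p => ?_)
          (euclid_prod_integrable g0 g2 (integrable_G0 hl hδ) (integrable_G2 hl))
          (Filter.Eventually.of_forall fun p => ?_)
        · have h1 : (0:ℝ) < δ ^ 3 * ‖p‖ ^ 6 + lam ^ 2 * (p 2) ^ 2 + lam ^ 3 := by positivity
          positivity
        · exact pointwise_bound hl hδ p
    _ = (∫ t, g0 t) * (∫ t, g0 t) * (∫ t, g2 t) := euclid_prod_integral g0 g2
    _ = (Real.sqrt (lam / δ) * K1) * (Real.sqrt (lam / δ) * K1) * (Real.sqrt lam * K3) := by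
        rw [hg0, hg2, int_G0 hl hδ, int_G2 hl]
    _ = (lam / δ) * (K1 ^ 2 * K3) * Real.sqrt lam := by
        rw [show Real.sqrt (lam / δ) * K1 * (Real.sqrt (lam / δ) * K1) * (Real.sqrt lam * K3)
          = (Real.sqrt (lam / δ) * Real.sqrt (lam / δ)) * (K1 ^ 2 * K3 * Real.sqrt lam) by ring,
          Real.mul_self_sqrt (by positivity)]
        ring
    _ = max b lam * (K1 ^ 2 * K3) * Real.sqrt lam := by rw [hmax]
    _ ≤ (K1 ^ 2 * K3 + 1) * Real.sqrt lam * max b lam := by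
        nlinarith [mul_pos hsl hM, K1_nonneg, K3_nonneg, sq_nonneg K1,
          mul_nonneg (mul_nonneg (sq_nonneg K1) K3_nonneg) (mul_pos hsl hM).le]
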